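/- arXiv:2006.09490 — 4 statements merged into one kernel-verified Lean document; each statement's English description precedes it below -/
import Mathlib

section
/- Let n be a positive integer and let G, G* ⊆ ℝⁿ be sets with G* ⊆ G and with the complement G \ G* finite of cardinality ℓ. Let F : ℕ → Set(ℝⁿ) and u : ℕ → ℝⁿ be sequences such that for every index l: (i) F(l) ⊆ G; (ii) G* ⊆ F(l); (iii) if F(l) is nonempty then u(l) ∈ F(l); and (iv) if F(l) is nonempty and u(l) ∉ G*, then F(l+1) ⊆ F(l) \ {u(l)}. Then there exists an index l ≤ ℓ such that either F(l) = ∅ or u(l) ∈ G*. (This is the termination theorem for the NE-finding algorithm: G is the KKT feasible set, G* the set of Nash equilibria, F(l) the feasible set of the l-th loop's optimization, and u(l) its computed minimizer; the algorithm terminates, returning a Nash equilibrium or detecting infeasibility, within at most ℓ = |G \ G*| loops.) -/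
/- Termination theorem for the NE-finding algorithm (Theorem 3.2):
`G` is the KKT feasible set, `Gstar` the set of Nash equilibria,
`F l` the feasible set of the `l`-th loop's optimization and `u l` its minimizer.
The algorithm terminates within at most `ℓ = |G \ Gstar|` loops. -/
theorem stmt_0 (n : ℕ) (hn : 0 < n) (G Gstar : Set (Fin n → ℝ))
    (hsub : Gstar ⊆ G) (hfin : (G \ Gstar).Finite)
    (F : ℕ → Set (Fin n → ℝ)) (u : ℕ → (Fin n → ℝ))
    (hFG : ∀ l, F l ⊆ G)
    (hGstarF : ∀ l, Gstar ⊆ F l)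
    (huF : ∀ l, (F l).Nonempty → u l ∈ F l)
    (hdec : ∀ l, (F l).Nonempty → u l ∉ Gstar → F (l + 1) ⊆ (F l) \ {u l}) :
    ∃ l ≤ (G \ Gstar).ncard, F l = ∅ ∨ u l ∈ Gstar := by
  set L := (G \ Gstar).ncard with hL
  by_contra hcon
  push_neg at hcon
  -- for each l ≤ L, F l is nonempty and u l ∉ Gstar
  have hbad : ∀ l ≤ L, (F l).Nonempty ∧ u l ∉ Gstar := by
    intro l hl
    rcases hcon l hl with ⟨h1, h2⟩
    exact ⟨h1, h2⟩
  have hsublG : ∀ l, F l \ Gstar ⊆ G \ Gstar := fun l =>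
    Set.diff_subset_diff_left (hFG l)
  have hfinl : ∀ l, (F l \ Gstar).Finite := fun l => hfin.subset (hsublG l)
  have claim : ∀ l, l ≤ L → (F l \ Gstar).ncard + l ≤ L := by
    intro l
    induction l with
    | zero =>
      intro _
      simpa using Set.ncard_le_ncard (hsublG 0) hfin
    | succ l ih =>
      intro hl
      have hl' : l ≤ L := Nat.le_of_succ_le hl
      rcases hbad l hl' with ⟨hne, hnot⟩
      have hul : u l ∈ F l \ Gstar := ⟨huF l hne, hnot⟩
      have hsubset : F (l + 1) \ Gstar ⊆ (F l \ Gstar) \ {u l} := by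
        intro x hx
        have := hdec l hne hnot hx.1
        exact ⟨⟨this.1, hx.2⟩, this.2⟩
      have hlt : (F (l + 1) \ Gstar).ncard < (F l \ Gstar).ncard := by
        calc (F (l + 1) \ Gstar).ncard
            ≤ ((F l \ Gstar) \ {u l}).ncard :=
              Set.ncard_le_ncard hsubset ((hfinl l).subset Set.diff_subset)
          _ < (F l \ Gstar).ncard := by
              apply Set.ncard_lt_ncard _ (hfinl l)
              exact Set.ssubset_iff_of_subset Set.diff_subset |>.mpr
                ⟨u l, hul, fun h => h.2 rfl⟩
      have := ih hl'
      omega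
  have hzero : (F L \ Gstar).ncard + L ≤ L := claim L le_rfl
  have : (F L \ Gstar).ncard = 0 := by omega
  have hFLsub : F L \ Gstar = ∅ := ((Set.ncard_eq_zero (hfinl L)).mp this)
  rcases hbad L le_rfl with ⟨hne, hnot⟩
  have : u L ∈ F L \ Gstar := ⟨huF L hne, hnot⟩
  rw [hFLsub] at this
  exact this
end

section
/- Consider the two-player game on ℝ² × ℝ² with objectives f₁(x₁, x₂) = x_{1,1}(x_{1,1} + x_{2,1} + 4x_{2,2}) + 2x_{1,2}² and f₂(x₁, x₂) = x_{2,1}(x_{1,1} + 2x_{1,2} + x_{2,1}) + x_{2,2}(2x_{1,1} + x_{1,2} + x_{2,2}), and feasible sets X₁ = X₂ = { v ∈ ℝ² : 1 − v₁² − v₂² ≥ 0 } (the closed unit disk). Then each of the following three points is a Nash equilibrium: (a) x₁* = (0,0), x₂* = (0,0); (b) x₁* = (1,0), x₂* = (−1/√5, −2/√5); (c) x₁* = (−1,0), x₂* = (1/√5, 2/√5). -/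
/-- First player's objective in Example 1.1. -/
def f₁ (a b : ℝ × ℝ) : ℝ := a.1 * (a.1 + b.1 + 4 * b.2) + 2 * a.2 ^ 2

/-- Second player's objective in Example 1.1. -/
def f₂ (a b : ℝ × ℝ) : ℝ :=
  b.1 * (a.1 + 2 * a.2 + b.1) + b.2 * (2 * a.1 + a.2 + b.2)

/-- The common feasible set: the closed unit disk. -/
def X : Set (ℝ × ℝ) := {v | 0 ≤ 1 - v.1 ^ 2 - v.2 ^ 2}

/-- Nash equilibrium of the two-player game of Example 1.1. -/
def isNE (a b : ℝ × ℝ) : Prop :=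
  a ∈ X ∧ b ∈ X ∧ (∀ x₁ ∈ X, f₁ a b ≤ f₁ x₁ b) ∧ (∀ x₂ ∈ X, f₂ a b ≤ f₂ a x₂)

/- Example 1.1/3.5: the three listed points are Nash equilibria. -/
theorem stmt_9 :
    isNE (0, 0) (0, 0) ∧
    isNE (1, 0) (-1 / Real.sqrt 5, -2 / Real.sqrt 5) ∧
    isNE (-1, 0) (1 / Real.sqrt 5, 2 / Real.sqrt 5) := by
  have hs0 : (0:ℝ) < Real.sqrt 5 := Real.sqrt_pos.mpr (by norm_num)
  have hs : Real.sqrt 5 ^ 2 = 5 := Real.sq_sqrt (by norm_num)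
  have hs2 : (2:ℝ) < Real.sqrt 5 := by nlinarith
  set s := Real.sqrt 5
  refine ⟨⟨by simp [X], by simp [X], ?_, ?_⟩, ⟨by simp [X], ?_, ?_, ?_⟩,
    ⟨by simp [X], ?_, ?_, ?_⟩⟩
  · intro x hx
    simp only [X, Set.mem_setOf_eq] at hx
    simp only [f₁]
    nlinarith [sq_nonneg x.1, sq_nonneg x.2]
  · intro x hx
    simp only [X, Set.mem_setOf_eq] at hx
    simp only [f₂]
    nlinarith [sq_nonneg x.1, sq_nonneg x.2]
  · simp only [X, Set.mem_setOf_eq]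
    have : (-1 / s) ^ 2 + (-2 / s) ^ 2 = 1 := by
      field_simp; nlinarith
    nlinarith
  · intro x hx
    simp only [X, Set.mem_setOf_eq] at hx
    simp only [f₁]
    have h1 : x.1 ≤ 1 := by nlinarith [sq_nonneg x.2]
    have h2 : -1 / s + 4 * (-2 / s) = -9 / s := by ring
    -- f₁(x,b) - f₁(a,b) = (x.1-1)(x.1-(9/s-1)) + 2x.2²
    have h9 : (9:ℝ)/s > 2 := by
      rw [gt_iff_lt, lt_div_iff₀ hs0]; nlinarith
    have hP : 0 ≤ (1 - x.1) * ((9/s - 1) - x.1) :=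
      mul_nonneg (by linarith) (by nlinarith)
    have hexp : (1 - x.1) * ((9/s - 1) - x.1) = 9/s - 1 - 9/s * x.1 + x.1 ^ 2 := by ring
    have hg : x.1 * (x.1 + -1 / s + 4 * (-2 / s)) = x.1 ^ 2 - 9/s * x.1 := by ring
    have hg2 : (1:ℝ) * (1 + -1 / s + 4 * (-2 / s)) = 1 - 9/s := by ring
    rw [hg, hg2]
    nlinarith [sq_nonneg x.2]
  · intro x hx
    simp only [X, Set.mem_setOf_eq] at hx
    simp only [f₂]
    -- goal: value at b = 1 - s ≤ x.1²+x.2²+x.1+2x.2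
    have hcs : (x.1 + 2 * x.2) ^ 2 ≤ 5 * (x.1^2 + x.2^2) := by nlinarith [sq_nonneg (2*x.1 - x.2)]
    have hb : (-1/s) * (1 + (-1/s)) + (-2/s) * (2 + (-2/s)) = 1 - s := by
      field_simp; nlinarith
    nlinarith [sq_nonneg (x.1 + 2*x.2 + s), sq_nonneg (x.1^2 + x.2^2 - 1), sq_nonneg (x.1 + 2*x.2)]
  · simp only [X, Set.mem_setOf_eq]
    have : (1 / s) ^ 2 + (2 / s) ^ 2 = 1 := by
      field_simp; nlinarith
    nlinarith
  · intro x hx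
    simp only [X, Set.mem_setOf_eq] at hx
    simp only [f₁]
    have h1 : -1 ≤ x.1 := by nlinarith [sq_nonneg x.2]
    have h9 : (9:ℝ)/s > 2 := by
      rw [gt_iff_lt, lt_div_iff₀ hs0]; nlinarith
    have hP : 0 ≤ (x.1 + 1) * (x.1 + (9/s - 1)) :=
      mul_nonneg (by linarith) (by nlinarith)
    have hg : x.1 * (x.1 + 1 / s + 4 * (2 / s)) = x.1 ^ 2 + 9/s * x.1 := by ring
    have hg2 : (-1:ℝ) * (-1 + 1 / s + 4 * (2 / s)) = 1 - 9/s := by ring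
    rw [hg, hg2]
    nlinarith [sq_nonneg x.2]
  · intro x hx
    simp only [X, Set.mem_setOf_eq] at hx
    simp only [f₂]
    have hcs : (x.1 + 2 * x.2) ^ 2 ≤ 5 * (x.1^2 + x.2^2) := by nlinarith [sq_nonneg (2*x.1 - x.2)]
    have hb : (1/s) * (-1 + (1/s)) + (2/s) * (-2 + (2/s)) = 1 - s := by
      field_simp; nlinarith
    nlinarith [sq_nonneg (x.1 + 2*x.2 - s), sq_nonneg (x.1^2 + x.2^2 - 1), sq_nonneg (x.1 + 2*x.2)]
end

section
/- Consider the two-player game on ℝ² × ℝ² with objectives f₁(x₁, x₂) = x_{1,1}(x_{1,1} + x_{2,1} + 4x_{2,2}) + 2x_{1,2}² and f₂(x₁, x₂) = x_{2,1}(x_{1,1} + 2x_{1,2} + x_{2,1}) + x_{2,2}(2x_{1,1} + x_{1,2} + x_{2,2}), and feasible sets X₁ = X₂ = { v ∈ ℝ² : 1 − v₁² − v₂² ≥ 0 } (the closed unit disk). Then every Nash equilibrium of this game is one of the following three points: (a) x₁* = (0,0), x₂* = (0,0); (b) x₁* = (1,0), x₂* = (−1/√5, −2/√5); (c) x₁*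 = (−1,0), x₂* = (1/√5, 2/√5). In particular, the game has exactly three Nash equilibria. -/
/- Example 1.1/3.5 (uniqueness part): the game has exactly the three listed
Nash equilibria. -/
set_option maxHeartbeats 4000000 in
theorem stmt_10 :
    {p : (ℝ × ℝ) × (ℝ × ℝ) | isNE p.1 p.2} =
      {(((0 : ℝ), (0 : ℝ)), ((0 : ℝ), (0 : ℝ))),
       (((1 : ℝ), (0 : ℝ)), (-1 / Real.sqrt 5, -2 / Real.sqrt 5)),
       ((-1, (0 : ℝ)), (1 / Real.sqrt 5, 2 / Real.sqrt 5))} := by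
  have hs : Real.sqrt 5 ^ 2 = 5 := Real.sq_sqrt (by norm_num)
  have hs0 : (0:ℝ) < Real.sqrt 5 := Real.sqrt_pos.mpr (by norm_num)
  set s := Real.sqrt 5 with hsdef
  have hs2 : 2 < s := by nlinarith
  have hs3 : s < 3 := by nlinarith
  have e1 : -1 / s = -(s/5) := by field_simp; nlinarith
  have e2 : -2 / s = -(2*s/5) := by field_simp; nlinarith
  have e3 : 1 / s = s/5 := by field_simp; nlinarith
  have e4 : 2 / s = 2*s/5 := by field_simp; nlinarith
  ext ⟨⟨a1,a2⟩,⟨b1,b2⟩⟩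
  simp only [Set.mem_setOf_eq, Set.mem_insert_iff, Set.mem_singleton_iff,
    Prod.mk.injEq, isNE, X, f₁, f₂]
  constructor
  · rintro ⟨ha, hb, h1, h2⟩
    -- Step 1: a2 = 0
    have ha2 : a2 = 0 := by
      have h := h1 (a1, 0) (by show (0:ℝ) ≤ 1 - a1^2 - (0:ℝ)^2; nlinarith)
      simp only at h
      nlinarith [sq_nonneg a2]
    subst ha2
    by_cases hA : a1^2 ≤ 4/5
    · -- interior case for player 2's best response
      have h := h2 (-(a1/2), -a1) (by show (0:ℝ) ≤ 1 - (-(a1/2))^2 - (-a1)^2; nlinarith)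
      simp only at h
      have hkey : (b1 + a1/2)^2 + (b2 + a1)^2 ≤ 0 := by nlinarith
      have hb1 : b1 = -(a1/2) := by nlinarith [sq_nonneg (b1 + a1/2), sq_nonneg (b2 + a1)]
      have hb2 : b2 = -a1 := by nlinarith [sq_nonneg (b1 + a1/2), sq_nonneg (b2 + a1)]
      subst hb1; subst hb2
      by_cases hB : a1^2 ≤ 16/81
      · have h' := h1 (9*a1/4, 0) (by show (0:ℝ) ≤ 1 - (9*a1/4)^2 - (0:ℝ)^2; nlinarith)
        simp only at h'
        have ha1 : a1 = 0 := by nlinarith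
        subst ha1
        norm_num
      · exfalso
        rcases le_or_gt a1 0 with h0 | h0
        · have h' := h1 (-1, 0) (by norm_num)
          simp only at h'
          nlinarith
        · have h' := h1 (1, 0) (by norm_num)
          simp only at h'
          nlinarith
    · -- boundary case
      push_neg at hA
      rcases le_or_gt a1 0 with h0 | h0
      · -- a1 < 0, expect a1 = -1, b = (1/s, 2/s)
        have hsa : s * a1 < -2 := by nlinarith
        have h := h2 (1/s, 2/s) (by show (0:ℝ) ≤ 1 - (1/s)^2 - (2/s)^2; rw [e3, e4]; nlinarith)
        rw [e3, e4] at h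
        simp only at h
        have hcs : b1 + 2*b2 ≤ s := by
          nlinarith [sq_nonneg (2*b1 - b2), sq_nonneg (b1 + 2*b2 - s)]
        have step : s*(b1^2+b2^2) - 2*(b1+2*b2) + s ≤ 0 := by
          nlinarith [mul_le_mul_of_nonneg_left h hs0.le,
            mul_nonneg (by linarith : (0:ℝ) ≤ -(s*a1) - 2) (by linarith : (0:ℝ) ≤ s - (b1 + 2*b2))]
        have hkey : (s*b1 - 1)^2 + (s*b2 - 2)^2 ≤ 0 := by
          nlinarith [mul_le_mul_of_nonneg_left step hs0.le]
        have hb1 : b1 = 1/s := by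
          have h1' : s*b1 - 1 = 0 := by nlinarith [sq_nonneg (s*b1 - 1), sq_nonneg (s*b2 - 2)]
          field_simp
          linarith
        have hb2 : b2 = 2/s := by
          have h2' : s*b2 - 2 = 0 := by nlinarith [sq_nonneg (s*b1 - 1), sq_nonneg (s*b2 - 2)]
          field_simp
          linarith
        have ha1 : a1 = -1 := by
          have h' := h1 (-1, 0) (by norm_num)
          simp only at h'
          rw [hb1, hb2, e3, e4] at h'
          have hle : -1 ≤ a1 := by nlinarith
          nlinarith
        right; right
        exact ⟨⟨ha1, rfl⟩, hb1, hb2⟩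
      · -- a1 > 0, expect a1 = 1, b = (-1/s, -2/s)
        have hsa : 2 < s * a1 := by nlinarith
        have h := h2 (-1/s, -2/s) (by show (0:ℝ) ≤ 1 - (-1/s)^2 - (-2/s)^2; rw [e1, e2]; nlinarith)
        rw [e1, e2] at h
        simp only at h
        have hcs : -s ≤ b1 + 2*b2 := by
          nlinarith [sq_nonneg (2*b1 - b2), sq_nonneg (b1 + 2*b2 + s)]
        have step : s*(b1^2+b2^2) + 2*(b1+2*b2) + s ≤ 0 := by
          nlinarith [mul_le_mul_of_nonneg_left h hs0.le,
            mul_nonneg (by linarith : (0:ℝ) ≤ s*a1 - 2) (by linarith : (0:ℝ) ≤ b1 + 2*b2 + s)]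
        have hkey : (s*b1 + 1)^2 + (s*b2 + 2)^2 ≤ 0 := by
          nlinarith [mul_le_mul_of_nonneg_left step hs0.le]
        have hb1 : b1 = -1/s := by
          have h1' : s*b1 + 1 = 0 := by nlinarith [sq_nonneg (s*b1 + 1), sq_nonneg (s*b2 + 2)]
          field_simp
          linarith
        have hb2 : b2 = -2/s := by
          have h2' : s*b2 + 2 = 0 := by nlinarith [sq_nonneg (s*b1 + 1), sq_nonneg (s*b2 + 2)]
          field_simp
          linarith
        have ha1 : a1 = 1 := by
          have h' := h1 (1, 0) (by norm_num)
          simp only at h'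
          rw [hb1, hb2, e1, e2] at h'
          have hle : a1 ≤ 1 := by nlinarith
          nlinarith
        right; left
        exact ⟨⟨ha1, rfl⟩, hb1, hb2⟩
  · rintro (⟨⟨ha1, ha2⟩, hb1, hb2⟩ | ⟨⟨ha1, ha2⟩, hb1, hb2⟩ | ⟨⟨ha1, ha2⟩, hb1, hb2⟩) <;>
      subst ha1 <;> subst ha2 <;> subst hb1 <;> subst hb2
    · refine ⟨by norm_num, by norm_num, ?_, ?_⟩
      · rintro ⟨x1, x2⟩ hx
        simp only [Set.mem_setOf_eq] at hx
        simp only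
        nlinarith [sq_nonneg x1, sq_nonneg x2]
      · rintro ⟨x1, x2⟩ hx
        simp only [Set.mem_setOf_eq] at hx
        simp only
        nlinarith [sq_nonneg x1, sq_nonneg x2]
    · refine ⟨by norm_num, ?_, ?_, ?_⟩
      · show (0:ℝ) ≤ 1 - (-1/s)^2 - (-2/s)^2
        rw [e1, e2]; nlinarith
      · rintro ⟨x1, x2⟩ hx
        simp only [Set.mem_setOf_eq] at hx
        simp only
        rw [e1, e2]
        have hx1 : x1 ≤ 1 := by nlinarith [sq_nonneg x2]
        nlinarith [mul_nonneg (by linarith : (0:ℝ) ≤ 1 - x1)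
          (by nlinarith : (0:ℝ) ≤ 9*s/5 - 1 - x1), sq_nonneg x2]
      · rintro ⟨x1, x2⟩ hx
        simp only [Set.mem_setOf_eq] at hx
        simp only
        rw [e1, e2]
        nlinarith [sq_nonneg (s*x1 + 1), sq_nonneg (s*x2 + 2),
          mul_nonneg (by linarith : (0:ℝ) ≤ s - 2) hx]
    · refine ⟨by norm_num, ?_, ?_, ?_⟩
      · show (0:ℝ) ≤ 1 - (1/s)^2 - (2/s)^2
        rw [e3, e4]; nlinarith
      · rintro ⟨x1, x2⟩ hx
        simp only [Set.mem_setOf_eq] at hx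
        simp only
        rw [e3, e4]
        have hx1 : -1 ≤ x1 := by nlinarith [sq_nonneg x2]
        nlinarith [mul_nonneg (by linarith : (0:ℝ) ≤ 1 + x1)
          (by nlinarith : (0:ℝ) ≤ 9*s/5 - 1 + x1), sq_nonneg x2]
      · rintro ⟨x1, x2⟩ hx
        simp only [Set.mem_setOf_eq] at hx
        simp only
        rw [e3, e4]
        nlinarith [sq_nonneg (s*x1 - 1), sq_nonneg (s*x2 - 2),
          mul_nonneg (by linarith : (0:ℝ) ≤ s - 2) hx]
end

section
/- Consider the system of polynomial equations and inequalities in the variables (x_{1,1}, x_{1,2}, x_{2,1}, x_{2,2}, λ₁, λ₂) ∈ ℝ⁶: 2x_{1,1} + x_{2,1} + 4x_{2,2} = −2λ₁ x_{1,1}; 4x_{1,2} = −2λ₁ x_{1,2}; x_{1,1} + 2x_{1,2} + 2x_{2,1} = −2λ₂ x_{2,1}; 2x_{1,1} + x_{1,2} + 2x_{2,2} = −2λ₂ x_{2,2}; λ₁(1 − x_{1,1}² − x_{1,2}²) = 0; λ₂(1 − x_{2,1}² − x_{2,2}²) = 0; 1 − x_{1,1}² − x_{1,2}² ≥ 0;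 1 − x_{2,1}² − x_{2,2}² ≥ 0; λ₁ ≥ 0; λ₂ ≥ 0. The set of solutions of this system is exactly the three tuples: (i) x₁ = (0,0), x₂ = (0,0), λ₁ = λ₂ = 0; (ii) x₁ = (1,0), x₂ = (−1/√5, −2/√5), λ₁ = 9√5/10 − 1, λ₂ = √5/2 − 1; (iii) x₁ = (−1,0), x₂ = (1/√5, 2/√5), λ₁ = 9√5/10 − 1, λ₂ = √5/2 − 1. -/
/- System (3.12): the KKT system of the game of Example 1.1 has exactly the
three listed solutions. -/
set_option maxHeartbeats 1600000 in
theorem stmt_11 (x11 x12 x21 x22 l1 l2 : ℝ) :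
    (2 * x11 + x21 + 4 * x22 = -2 * l1 * x11 ∧
     4 * x12 = -2 * l1 * x12 ∧
     x11 + 2 * x12 + 2 * x21 = -2 * l2 * x21 ∧
     2 * x11 + x12 + 2 * x22 = -2 * l2 * x22 ∧
     l1 * (1 - x11 ^ 2 - x12 ^ 2) = 0 ∧
     l2 * (1 - x21 ^ 2 - x22 ^ 2) = 0 ∧
     0 ≤ 1 - x11 ^ 2 - x12 ^ 2 ∧
     0 ≤ 1 - x21 ^ 2 - x22 ^ 2 ∧
     0 ≤ l1 ∧ 0 ≤ l2) ↔
    ((x11, x12, x21, x22, l1, l2) = (0, 0, 0, 0, 0, 0) ∨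
     (x11, x12, x21, x22, l1, l2) =
       (1, 0, -1 / Real.sqrt 5, -2 / Real.sqrt 5,
        9 * Real.sqrt 5 / 10 - 1, Real.sqrt 5 / 2 - 1) ∨
     (x11, x12, x21, x22, l1, l2) =
       (-1, 0, 1 / Real.sqrt 5, 2 / Real.sqrt 5,
        9 * Real.sqrt 5 / 10 - 1, Real.sqrt 5 / 2 - 1)) := by
  have hs : Real.sqrt 5 ^ 2 = 5 := Real.sq_sqrt (by norm_num)
  have hs0 : (0:ℝ) < Real.sqrt 5 := Real.sqrt_pos.mpr (by norm_num)
  have hs2 : (2:ℝ) < Real.sqrt 5 := by nlinarith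
  set s := Real.sqrt 5 with hsdef
  constructor
  · rintro ⟨h1, h2, h3, h4, h5, h6, h7, h8, hl1, hl2⟩
    have hx12 : x12 = 0 := by
      have h : (4 + 2 * l1) * x12 = 0 := by linear_combination h2
      rcases mul_eq_zero.mp h with h | h
      · linarith
      · exact h
    have hx22 : x22 = 2 * x21 := by
      have h : (2 + 2 * l2) * (x22 - 2 * x21) = 0 := by
        linear_combination h4 - 2 * h3 + 3 * hx12
      rcases mul_eq_zero.mp h with h | h
      · linarith
      · linarith
    have e3 : (2 + 2 * l2) * x21 = -x11 := by
      linear_combination h3 - 2 * hx12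
    have e1 : (2 + 2 * l1) * x11 = -9 * x21 := by
      linear_combination h1 - 4 * hx22
    have hkey : x21 * ((2 + 2 * l1) * (2 + 2 * l2) - 9) = 0 := by
      linear_combination (2 + 2 * l1) * e3 - e1
    rcases mul_eq_zero.mp hkey with hx21 | hprod
    · have hx11 : x11 = 0 := by
        have h := e3; rw [hx21] at h; linarith
      have hx220 : x22 = 0 := by rw [hx22, hx21]; ring
      have hl10 : l1 = 0 := by rw [hx11, hx12] at h5; nlinarith
      have hl20 : l2 = 0 := by rw [hx21, hx220] at h6; nlinarith
      left
      simp [hx11, hx12, hx21, hx220, hl10, hl20]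
    · have hprod9 : (2 + 2 * l1) * (2 + 2 * l2) = 9 := by linarith
      have hl2pos : 0 < l2 := by
        rcases lt_or_eq_of_le hl2 with h | h
        · exact h
        · exfalso
          have hl2z : l2 = 0 := h.symm
          have hx11sq : x11 ^ 2 = 1 := by rw [hx12] at h5; nlinarith
          have h2x : (2:ℝ) * x21 = -x11 := by rw [hl2z] at e3; linear_combination e3
          have hx21q : x21 ^ 2 = 1 / 4 := by
            linear_combination ((2 * x21 - x11) / 4) * h2x + (1 / 4) * hx11sq
          rw [hx22] at h8
          nlinarith [hx21q]
      have hx21sq : x21 ^ 2 = 1 / 5 := by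
        have hact : 1 - x21 ^ 2 - x22 ^ 2 = 0 := by
          rcases mul_eq_zero.mp h6 with h | h
          · exact absurd h (ne_of_gt hl2pos)
          · exact h
        rw [hx22] at hact; linear_combination -(1 / 5) * hact
      have hl1pos : 0 < l1 := by
        rcases lt_or_eq_of_le hl1 with h | h
        · exact h
        · exfalso
          have hl1z : l1 = 0 := h.symm
          rw [hl1z] at e1
          have e1' : 2 * x11 = -9 * x21 := by linear_combination e1
          have hq : x11 ^ 2 = 81 / 20 := by
            linear_combination ((2 * x11 - 9 * x21) / 4) * e1' + (81 / 4) * hx21sq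
          rw [hx12] at h7
          nlinarith [hq]
      have hx11sq : x11 ^ 2 = 1 := by
        have hact : 1 - x11 ^ 2 - x12 ^ 2 = 0 := by
          rcases mul_eq_zero.mp h5 with h | h
          · exact absurd h (ne_of_gt hl1pos)
          · exact h
        rw [hx12] at hact; linarith
      have hsq : (2 + 2 * l1) ^ 2 = 81 / 5 := by
        linear_combination ((2 + 2 * l1) * x11 - 9 * x21) * e1
          - (2 + 2 * l1) ^ 2 * hx11sq + 81 * hx21sq
      have hl1v : l1 = 9 * s / 10 - 1 := by
        have h : (2 + 2 * l1 - 9 * s / 5) * (2 + 2 * l1 + 9 * s / 5) = 0 := by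
          linear_combination hsq - 81 / 25 * hs
        rcases mul_eq_zero.mp h with h | h
        · linarith only [h]
        · linarith only [h, hl1, hs2]
      have hl2v : l2 = s / 2 - 1 := by
        rw [hl1v] at hprod9
        have h : s * (2 + 2 * l2 - s) = 0 := by
          linear_combination (5 / 9) * hprod9 - hs
        rcases mul_eq_zero.mp h with h | h
        · linarith only [h, hs0]
        · linarith only [h]
      have hA : 2 + 2 * l2 = s := by linarith only [hl2v]
      rw [hA] at e3
      have hx11cases : (x11 - 1) * (x11 + 1) = 0 := by linear_combination hx11sq
      rcases mul_eq_zero.mp hx11cases with h | h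
      · have hx11 : x11 = 1 := by linarith only [h]
        rw [hx11] at e3
        have hx21v : x21 = -1 / s := by
          field_simp
          linear_combination e3
        have hx22v : x22 = -2 / s := by
          rw [hx22, hx21v]; ring
        right; left
        simp [hx11, hx12, hx21v, hx22v, hl1v, hl2v]
      · have hx11 : x11 = -1 := by linarith only [h]
        rw [hx11] at e3
        have hx21v : x21 = 1 / s := by
          field_simp
          linear_combination e3
        have hx22v : x22 = 2 / s := by
          rw [hx22, hx21v]; ring
        right; right
        simp [hx11, hx12, hx21v, hx22v, hl1v, hl2v]
  · rintro (h | h | h) <;>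
      simp only [Prod.mk.injEq] at h <;>
      obtain ⟨e1, e2, e3, e4, e5, e6⟩ := h <;>
      subst e1 e2 e3 e4 e5 e6
    · norm_num
    · refine ⟨?_, by ring, ?_, ?_, by ring, ?_, by norm_num, ?_, by nlinarith, by nlinarith⟩
      · field_simp
        nlinarith
      · field_simp
        nlinarith
      · field_simp
        nlinarith
      · field_simp
        nlinarith
      · field_simp
        rw [hs]; norm_num
    · refine ⟨?_, by ring, ?_, ?_, by ring, ?_, by norm_num, ?_, by nlinarith, by nlinarith⟩
      · field_simp
        nlinarith
      · field_simp
        nlinarith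
      · field_simp
        nlinarith
      · field_simp
        nlinarith
      · field_simp
        rw [hs]; norm_num
end
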